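/- Let G be a connected bipartite graph, M a perfect matching of G, and k ≥ 1 an integer. Then G is k-extendable if and only if the digraph D(G,M) is strongly k-connected. -/

import Mathlib

open SimpleGraph

universe u v

variable {V : Type u} {W : Type v}

/-- `(A, B)` is a bipartition of the simple graph `G`. -/
def IsBipartition (G : SimpleGraph V) (A B : Set V) : Prop :=
  Disjoint A B ∧ A ∪ B = Set.univ ∧
    ∀ ⦃u v⦄, G.Adj u v → ((u ∈ A ∧ v ∈ B) ∨ (u ∈ B ∧ v ∈ A))

/-- `G` is `k`-extendable: every matching with at most `k` edges extends
to a perfect matching. -/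
def KExtendable (G : SimpleGraph V) (k : ℕ) : Prop :=
  ∀ M : G.Subgraph, M.IsMatching → M.edgeSet.ncard ≤ k →
    ∃ P : G.Subgraph, M ≤ P ∧ P.IsPerfectMatching

/-- A brace is a `2`-extendable bipartite graph. -/
def IsBrace (G : SimpleGraph V) : Prop :=
  (∃ A B, IsBipartition G A B) ∧ KExtendable G 2

/-- `G` has a matching whose vertex set is exactly `S`
(i.e. the subgraph of `G` induced on `S` has a perfect matching). -/
def HasPMOn (G : SimpleGraph V) (S : Set V) : Prop :=
  ∃ M : G.Subgraph, M.IsMatching ∧ M.verts = S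

/-- An orientation of a simple graph: each edge gets exactly one direction. -/
structure GraphOrientation (G : SimpleGraph V) where
  dir : V → V → Prop
  asymm : ∀ u v, dir u v → ¬ dir v u
  adj_iff : ∀ u v, G.Adj u v ↔ (dir u v ∨ dir v u)

open scoped Classical in
/-- The number of edges of the walk `w` traversed in agreement with the
orientation `o`. -/
noncomputable def forwardCount {G : SimpleGraph V} (o : GraphOrientation G) {u v : V}
    (w : G.Walk u v) : ℕ :=
  w.darts.countP fun d => decide (o.dir d.fst d.snd)

/-- `o` is a Pfaffian orientation of `G`: every central even circuit is oddly
oriented.  (For an even circuit, being oddly oriented with respect to one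
traversal direction is equivalent to being oddly oriented with respect to the
other.) -/
def IsPfaffian (G : SimpleGraph V) (o : GraphOrientation G) : Prop :=
  ∀ (v : V) (c : G.Walk v v), c.IsCycle → Even c.length →
    HasPMOn G {x | x ∉ c.support} → Odd (forwardCount o c)

/-- The neighborhood of a vertex set: vertices outside `X` adjacent to `X`. -/
def nbdSet (G : SimpleGraph V) (X : Set V) : Set V :=
  {v | v ∉ X ∧ ∃ x ∈ X, G.Adj x v}

/-- Restriction of `G` to the vertex set `T`, kept on the same vertex type. -/
def restrictG (G : SimpleGraph V) (T : Set V) : SimpleGraph V where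
  Adj x y := G.Adj x y ∧ x ∈ T ∧ y ∈ T
  symm := ⟨fun x y ⟨h, hx, hy⟩ => ⟨h.symm, hy, hx⟩⟩
  loopless := ⟨fun x ⟨h, _, _⟩ => G.loopless.irrefl x h⟩

/-- Every edge of `G` is contained in a matching with vertex set exactly `S`.
(When the edges of `G` lie within `S`, this says that the graph on `S` is
1-extendable.) -/
def OneExtendableOn (G : SimpleGraph V) (S : Set V) : Prop :=
  ∀ ⦃x y⦄, G.Adj x y → ∃ M : G.Subgraph, M.IsMatching ∧ M.verts = S ∧ M.Adj x y

/-- `G` is 1-extendable: every edge lies in a perfect matching. -/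
def OneExtendable (G : SimpleGraph V) : Prop :=
  OneExtendableOn G Set.univ

/-- `G` is `k`-connected: more than `k` vertices, and deleting fewer than
`k` vertices leaves a connected graph. -/
def KConnected (G : SimpleGraph V) [Fintype V] (k : ℕ) : Prop :=
  k < Fintype.card V ∧ ∀ S : Set V, S.ncard < k → (G.induce (Sᶜ : Set V)).Connected

/-- A walk is `M`-alternating if its edges alternately belong and do not
belong to `M`. -/
def IsAltWalk {G : SimpleGraph V} (M : G.Subgraph) {u v : V} (w : G.Walk u v) : Prop :=
  (∀ (i : ℕ) (h : i < w.edges.length), (w.edges.get ⟨i, h⟩ ∈ M.edgeSet ↔ Even i)) ∨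
  (∀ (i : ℕ) (h : i < w.edges.length), (w.edges.get ⟨i, h⟩ ∈ M.edgeSet ↔ Odd i))

/-- A path is `M`-alternating if every internal vertex (vertex of degree two
in the path) is incident with an edge of `M` lying on the path. -/
def IsMAltPath {G : SimpleGraph V} (M : G.Subgraph) {a b : V} (p : G.Walk a b) : Prop :=
  p.IsPath ∧ ∀ x ∈ p.support, x ≠ a → x ≠ b → ∃ y, M.Adj x y ∧ s(x, y) ∈ p.edges

/-- An `H`-path: a path with at least one edge, both ends in `H`, and
otherwise disjoint from `H`. -/
def IsHPath {G : SimpleGraph V} (H : G.Subgraph) {a b : V} (p : G.Walk a b) : Prop :=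
  0 < p.length ∧ a ∈ H.verts ∧ b ∈ H.verts ∧
  (∀ x ∈ p.support, x ≠ a → x ≠ b → x ∉ H.verts) ∧
  ∀ e ∈ p.edges, e ∉ H.edgeSet

/-- Neighborhood of a vertex set inside a subgraph `H`. -/
def nbdSetSub {G : SimpleGraph V} (H : G.Subgraph) (X : Set V) : Set V :=
  {v | v ∉ X ∧ ∃ x ∈ X, H.Adj x v}

/-- `M` is a perfect matching of the subgraph `H`. -/
def SubgraphPM {G₀ : SimpleGraph V} (H M : G₀.Subgraph) : Prop :=
  M ≤ H ∧ M.IsMatching ∧ M.verts = H.verts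

/-- `G` is a 4-sum of the subgraphs `G₁, G₂` of `G₀` along the central
circuit `C` with vertices `a, b, c, d` (in order):
`G₁ ∪ G₂ = G₀`, `G₁ ∩ G₂ = C`, each `Gᵢ` has a vertex not in the other, and
`G` is obtained from `G₀` by deleting some (possibly no) edges of `C`. -/
def IsFourSum (G G₀ : SimpleGraph V) (G₁ G₂ : G₀.Subgraph) (a b c d : V) : Prop :=
  ([a, b, c, d] : List V).Nodup ∧
  G₀.Adj a b ∧ G₀.Adj b c ∧ G₀.Adj c d ∧ G₀.Adj d a ∧
  HasPMOn G₀ (({a, b, c, d} : Set V)ᶜ) ∧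
  G₁ ⊔ G₂ = (⊤ : G₀.Subgraph) ∧
  (G₁ ⊓ G₂).verts = ({a, b, c, d} : Set V) ∧
  (∀ x y, (G₁ ⊓ G₂).Adj x y ↔
      s(x, y) ∈ ({s(a, b), s(b, c), s(c, d), s(d, a)} : Set (Sym2 V))) ∧
  (G₁.verts \ G₂.verts).Nonempty ∧ (G₂.verts \ G₁.verts).Nonempty ∧
  (∀ x y, G.Adj x y → G₀.Adj x y) ∧
  (∀ x y, G₀.Adj x y →
      G.Adj x y ∨ s(x, y) ∈ ({s(a, b), s(b, c), s(c, d), s(d, a)} : Set (Sym2 V)))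

/-- `G` contains `H`: some even subdivision of `H` (each edge replaced by an
internally disjoint path with an odd number of edges) is isomorphic to a
central subgraph of `G`. -/
def Contains (G : SimpleGraph V) (H : SimpleGraph W) : Prop :=
  ∃ (f : W → V) (p : ∀ u v : W, H.Adj u v → G.Walk (f u) (f v)),
    Function.Injective f ∧
    (∀ u v (h : H.Adj u v), (p u v h).IsPath ∧ Odd (p u v h).length) ∧
    (∀ u v (h : H.Adj u v), p v u h.symm = (p u v h).reverse) ∧
    (∀ u v (h : H.Adj u v) (w : W), f w ∈ (p u v h).support → w = u ∨ w = v) ∧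
    (∀ u v u' v' (h : H.Adj u v) (h' : H.Adj u' v'), s(u, v) ≠ s(u', v') →
      ∀ x, x ∈ (p u v h).support → x ∈ (p u' v' h').support →
        (x = f u ∨ x = f v) ∧ (x = f u' ∨ x = f v')) ∧
    HasPMOn G ((Set.range f ∪ {x | ∃ u v, ∃ h : H.Adj u v, x ∈ (p u v h).support})ᶜ)

/-- `K'` is obtained from `K` by a bicontraction: contracting both edges at a
vertex `u` of degree two (with distinct neighbors `a` and `b`) and deleting
parallel edges. -/
def BicontractAt (K K' : (⊤ : SimpleGraph V).Subgraph) : Prop :=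
  ∃ u a b : V, a ≠ b ∧ K.Adj u a ∧ K.Adj u b ∧
    (∀ x, K.Adj u x → x = a ∨ x = b) ∧
    K'.verts = K.verts \ {u, a} ∧
    ∀ x y, K'.Adj x y ↔ (x ∈ K.verts \ {u, a} ∧ y ∈ K.verts \ {u, a} ∧ x ≠ y ∧
      ∃ x' y', K.Adj x' y' ∧ (x' = x ∨ (x = b ∧ (x' = a ∨ x' = u))) ∧
        (y' = y ∨ (y = b ∧ (y' = a ∨ y' = u))))

/-- `G` weakly contains `H`: `G` has a central subgraph `K` from which a graph
isomorphic to `H` can be obtained by a sequence of bicontractions. -/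
def WeaklyContains (G : SimpleGraph V) (H : SimpleGraph W) : Prop :=
  ∃ K : (⊤ : SimpleGraph V).Subgraph,
    (∀ ⦃x y⦄, K.Adj x y → G.Adj x y) ∧
    HasPMOn G (K.vertsᶜ) ∧
    ∃ K' : (⊤ : SimpleGraph V).Subgraph,
      Relation.ReflTransGen BicontractAt K K' ∧ Nonempty (K'.coe ≃g H)

/-- The Heawood graph (LCF notation `[5, -5]⁷`): a 14-cycle together with the
chords `{i, i+5}` for even `i`. -/
def heawood : SimpleGraph (Fin 14) :=
  SimpleGraph.fromRel (fun i j => j = i + 1 ∨ (Even (i : ℕ) ∧ j = i + 5))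

/-- The digraph `D(G, M)` on the color class `A`, obtained from `G` by
directing every edge from `A` to `B` and contracting every edge of `M`. -/
def DGM (G : SimpleGraph V) (A : Set V) (M : G.Subgraph) : A → A → Prop :=
  fun a a' => ∃ b, M.Adj (↑a' : V) b ∧ G.Adj (↑a : V) b

/-- A digraph is strongly `k`-connected if deleting fewer than `k` vertices
leaves it strongly connected. -/
def StronglyKConnected {α : Type*} (D : α → α → Prop) (k : ℕ) : Prop :=
  ∀ S : Set α, S.ncard < k → ∀ u v : α, u ∉ S → v ∉ S →
    Relation.ReflTransGen (fun x y => D x y ∧ x ∉ S ∧ y ∉ S) u v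

/-- The edge `u₁u₂` of the graph with vertex set `S` obtained from `G₁` is
reducing: deleting both ends destroys 1-extendability. -/
def ReducingIn (G₁ : SimpleGraph V) (S : Set V) (u₁ u₂ : V) : Prop :=
  G₁.Adj u₁ u₂ ∧
    ¬ OneExtendableOn (restrictG G₁ (({u₁, u₂} : Set V)ᶜ)) (S \ {u₁, u₂})

/-- `G` (bipartite with bipartition `(A, B)`) is a 2-sum of `G₁` (with vertex
set `V₁`) and `G₂` (with vertex set `V₂`) along the edge `u₁u₂`. -/
def IsTwoSum (G : SimpleGraph V) (A B : Set V) (u₁ u₂ : V)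
    (G₁ G₂ : SimpleGraph V) (V₁ V₂ : Set V) : Prop :=
  u₁ ∈ A ∧ u₂ ∈ B ∧ G.Adj u₁ u₂ ∧
  ∃ X : Set V, X.Nonempty ∧ X ⊆ A \ {u₁} ∧ X ≠ A \ {u₁} ∧
    (nbdSet G X \ {u₂}).ncard = X.ncard ∧
    V₂ = ((X ∪ (nbdSet G X \ {u₂}))ᶜ : Set V) ∧
    V₁ = X ∪ (nbdSet G X \ {u₂}) ∪ {u₁, u₂} ∧
    (∀ x y, G₁.Adj x y ↔ ((G.Adj x y ∧ x ∈ V₁ ∧ y ∈ V₁) ∨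
      (x = u₁ ∧ y ∈ {w | w ∈ nbdSet G X \ {u₂} ∧ ¬ G.Adj u₁ w ∧ ∃ z, z ∉ V₁ ∧ G.Adj w z}) ∨
      (y = u₁ ∧ x ∈ {w | w ∈ nbdSet G X \ {u₂} ∧ ¬ G.Adj u₁ w ∧ ∃ z, z ∉ V₁ ∧ G.Adj w z}))) ∧
    (∀ x y, G₂.Adj x y ↔ ((G.Adj x y ∧ x ∈ V₂ ∧ y ∈ V₂) ∨
      (x = u₂ ∧ y ∈ {w | w ∈ (A \ X) \ {u₁} ∧ ¬ G.Adj u₂ w ∧ ∃ z, z ∉ V₂ ∧ G.Adj w z}) ∨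
      (y = u₂ ∧ x ∈ {w | w ∈ (A \ X) \ {u₁} ∧ ¬ G.Adj u₂ w ∧ ∃ z, z ∉ V₂ ∧ G.Adj w z})))

/-- A trisector: a set of four vertices whose deletion leaves at least three
connected components. -/
def IsTrisector (G : SimpleGraph V) (X : Set V) : Prop :=
  X.ncard = 4 ∧ 3 ≤ Nat.card (G.induce (Xᶜ : Set V)).ConnectedComponent

section AuxiliaryLemmas

variable {α : Type*} {G : SimpleGraph V}

lemma notNodup_decomp : ∀ (L : List α), ¬ L.Nodup →
    ∃ (x : α) (L₁ L₂ L₃ : List α), L = L₁ ++ x :: (L₂ ++ x :: L₃) := by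
  intro L
  induction L with
  | nil => intro h; exact absurd List.nodup_nil h
  | cons a L' ih =>
    intro h
    by_cases ha : a ∈ L'
    · obtain ⟨s, t, rfl⟩ := List.append_of_mem ha
      exact ⟨a, [], s, t, by simp⟩
    · have : ¬ L'.Nodup := fun hn => h (List.nodup_cons.mpr ⟨ha, hn⟩)
      obtain ⟨x, L₁, L₂, L₃, rfl⟩ := ih this
      exact ⟨x, a :: L₁, L₂, L₃, by simp⟩

lemma getLast?_append_cons (L₁ L₂ : List α) (x : α) :
    (L₁ ++ x :: L₂).getLast? = (x :: L₂).getLast? := by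
  rw [List.getLast?_append]
  cases h : (x :: L₂).getLast? with
  | none => simp [List.getLast?_eq_none_iff] at h
  | some b => simp

/-- From any nonempty chain one can extract a duplicate-free chain with the
same head and last element, using only elements of the original list. -/
lemma chain'_nodup_extract {r : α → α → Prop} :
    ∀ (n : ℕ) (L : List α), L.length ≤ n → L ≠ [] → List.Chain' r L →
    ∃ L' : List α, L' ≠ [] ∧ List.Chain' r L' ∧ L'.Nodup ∧
      L'.head? = L.head? ∧ L'.getLast? = L.getLast? ∧ ∀ x ∈ L', x ∈ L := by
  intro n
  induction n with
  | zero =>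
    intro L hL hne _
    cases L with
    | nil => exact absurd rfl hne
    | cons a t => simp at hL
  | succ n ih =>
    intro L hL hne hch
    by_cases hnd : L.Nodup
    · exact ⟨L, hne, hch, hnd, rfl, rfl, fun x hx => hx⟩
    obtain ⟨x, L₁, L₂, L₃, rfl⟩ := notNodup_decomp L hnd
    have hsp := (List.isChain_split (c := x) (l₁ := L₁) (l₂ := L₂ ++ x :: L₃)).mp hch
    have hch1 : List.Chain' r (L₁ ++ x :: L₃) := by
      have h2 : List.Chain' r (x :: L₃) :=
        ((List.isChain_split (c := x) (l₁ := x :: L₂) (l₂ := L₃)).mp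
          (by simpa using hsp.2)).2
      exact (List.isChain_split (c := x) (l₁ := L₁) (l₂ := L₃)).mpr ⟨hsp.1, h2⟩
    have hlen : (L₁ ++ x :: L₃).length ≤ n := by
      simp only [List.length_append, List.length_cons] at hL ⊢
      omega
    obtain ⟨L', h1, h2, h3, h4, h5, h6⟩ := ih _ hlen (by simp) hch1
    refine ⟨L', h1, h2, h3, ?_, ?_, ?_⟩
    · rw [h4]
      cases L₁ with
      | nil => simp
      | cons a t => simp
    · rw [h5, getLast?_append_cons, getLast?_append_cons]
      cases L₃ with
      | nil =>
        show some x = ((x :: L₂) ++ [x]).getLast?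
        rw [getLast?_append_cons (x :: L₂) [] x]
        rfl
      | cons a t =>
        show (x :: a :: t).getLast? = ((x :: L₂) ++ x :: a :: t).getLast?
        rw [getLast?_append_cons (x :: L₂) (a :: t) x]
    · intro y hy
      have := h6 y hy
      simp only [List.mem_append, List.mem_cons] at this ⊢
      tauto


lemma chain'_mem_tail {r : α → α → Prop} :
    ∀ (L : List α), List.Chain' r L → ∀ x ∈ L.tail, ∃ y, r y x := by
  intro L
  induction L with
  | nil => intro _ x hx; simp at hx
  | cons a l ih =>
    intro hch x hx
    simp only [List.tail_cons] at hx
    cases l with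
    | nil => simp at hx
    | cons b l' =>
      rcases List.mem_cons.mp hx with rfl | hx'
      · exact ⟨a, (List.isChain_cons_cons.mp hch).1⟩
      · exact ih (List.isChain_cons_cons.mp hch).2 x (by simpa using hx')

lemma chain'_mem_dropLast {r : α → α → Prop} :
    ∀ (L : List α), List.Chain' r L → ∀ x ∈ L.dropLast, ∃ y, r x y := by
  intro L
  induction L with
  | nil => intro _ x hx; simp at hx
  | cons a l ih =>
    intro hch x hx
    cases l with
    | nil => simp at hx
    | cons b l' =>
      rw [List.dropLast_cons₂] at hx
      rcases List.mem_cons.mp hx with rfl | hx'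
      · exact ⟨b, (List.isChain_cons_cons.mp hch).1⟩
      · exact ih (List.isChain_cons_cons.mp hch).2 x hx'


lemma cross_edge (hconn : G.Connected) {Z : Set V} (hne : Z.Nonempty)
    (hne' : Zᶜ.Nonempty) : ∃ x y, G.Adj x y ∧ x ∈ Z ∧ y ∉ Z := by
  obtain ⟨z, hz⟩ := hne
  obtain ⟨w, hw⟩ := hne'
  obtain ⟨p⟩ := hconn.preconnected z w
  clear hconn
  induction p with
  | nil => exact absurd hz hw
  | cons h q ih =>
    rename_i a b c
    by_cases hb : b ∈ Z
    · exact ih hb hw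
    · exact ⟨a, b, h, hz, hb⟩



lemma pigeonAux [Fintype V] {P : G.Subgraph}
    (hP : P.IsPerfectMatching) {m : V → V} (hminj : Function.Injective m)
    {X T : Set V} {b₀ : V} (hb₀ : b₀ ∈ m '' X)
    (hnbr : ∀ x ∈ X, ∀ y, G.Adj x y → y ∈ m '' X ∪ T)
    (hTblock : ∀ b ∈ T, ∀ x ∈ X, ¬ P.Adj x b)
    (hb₀block : ∀ x ∈ X, ¬ P.Adj x b₀) : False := by
  classical
  have key : ∀ x : X, ∃ y, P.Adj (x : V) y ∧ y ∈ (m '' X) \ {b₀} := by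
    rintro ⟨x, hx⟩
    obtain ⟨y, hy, -⟩ := hP.1 (hP.2 x)
    refine ⟨y, hy, ?_, ?_⟩
    · rcases hnbr x hx y (P.adj_sub hy) with h | h
      · exact h
      · exact absurd hy (hTblock y h x hx)
    · simp only [Set.mem_singleton_iff]
      rintro rfl
      exact hb₀block x hx hy
  choose φ hφadj hφmem using key
  have hinj : Function.Injective φ := by
    intro x x' h
    have h1 := hφadj x
    have h2 := hφadj x'
    rw [h] at h1
    obtain ⟨w, -, hw⟩ := hP.1 (hP.2 (φ x'))
    exact Subtype.ext ((hw _ h1.symm).trans (hw _ h2.symm).symm)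
  let f : X → ((m '' X) \ {b₀} : Set V) := fun x => ⟨φ x, hφmem x⟩
  have hfinj : Function.Injective f := fun a b h => hinj (congrArg Subtype.val h :)
  have hcard : Nat.card X ≤ Nat.card ((m '' X) \ {b₀} : Set V) :=
    Nat.card_le_card_of_injective f hfinj
  rw [Nat.card_coe_set_eq, Nat.card_coe_set_eq] at hcard
  have hlt : ((m '' X) \ {b₀}).ncard < (m '' X).ncard :=
    Set.ncard_diff_singleton_lt_of_mem hb₀ (Set.toFinite _)
  have himg : (m '' X).ncard = X.ncard := Set.ncard_image_of_injective _ hminj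
  omega


section CoreAux
variable [Fintype V] {A : Set V} {m : V → V} {M : G.Subgraph} {k : ℕ}

/-- From a duplicate-free chain `L` in the digraph relation, build a matching
pairing each non-last element `c` of `L` with `m d`, `d` the next element. -/
lemma pathMatching [Fintype V] (m : V → V) (hminj : Function.Injective m)
    {A : Set V} (hmB : ∀ x ∈ A, m x ∉ A) :
    ∀ (L : List V), L.Nodup → (∀ x ∈ L, x ∈ A) →
    List.Chain' (fun a b => G.Adj a (m b)) L →
    ∃ Pm : G.Subgraph, Pm.IsMatching ∧
      Pm.verts = {v | v ∈ L.dropLast} ∪ m '' {v | v ∈ L.tail} ∧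
      Pm.edgeSet.ncard ≤ {v | v ∈ L.dropLast}.ncard ∧
      (∀ x y, Pm.Adj x y → x ∈ L.dropLast ∨ y ∈ L.dropLast) := by
  intro L
  induction L with
  | nil =>
    intro _ _ _
    refine ⟨⊥, fun v hv => absurd hv (by simp), by simp, by simp, by simp⟩
  | cons a L' ih =>
    intro hnd hmem hch
    cases L' with
    | nil =>
      refine ⟨⊥, fun v hv => absurd hv (by simp), by simp, by simp, by simp⟩
    | cons b rest =>
      have hnd' : (b :: rest).Nodup := (List.nodup_cons.mp hnd).2
      have hmem' : ∀ x ∈ b :: rest, x ∈ A := fun x hx => hmem x (by simp [hx])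
      have hch' : List.Chain' (fun a b => G.Adj a (m b)) (b :: rest) := hch.tail
      obtain ⟨Pm', h1, h2, h3, h4⟩ := ih hnd' hmem' hch'
      have hadj : G.Adj a (m b) := List.isChain_cons_cons.mp hch |>.1
      have haA : a ∈ A := hmem a (by simp)
      have hanotin : a ∉ b :: rest := (List.nodup_cons.mp hnd).1
      have hsupp' : Pm'.support = Pm'.verts := h1.support_eq_verts
      have hdisj : Disjoint (G.subgraphOfAdj hadj).support Pm'.support := by
        rw [hsupp', h2, support_subgraphOfAdj]
        rw [Set.disjoint_left]
        intro z hz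
        simp only [Set.mem_insert_iff, Set.mem_singleton_iff] at hz
        rcases hz with rfl | rfl
        · rintro (hz1 | ⟨w, hw1, hw2⟩)
          · exact hanotin (List.dropLast_subset _ (by exact hz1))
          · have hwA : w ∈ A := hmem' w (List.tail_subset _ hw1)
            exact hmB w hwA (hw2 ▸ haA)
        · rintro (hz1 | ⟨w, hw1, hw2⟩)
          · have : m b ∈ A := hmem' _ (List.dropLast_subset _ (by exact hz1))
            exact hmB b (hmem' b (by simp)) this
          · have hwr : w ∈ rest := hw1
            have hwb : w = b := hminj hw2
            exact (List.nodup_cons.mp hnd').1 (hwb ▸ hwr)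
      refine ⟨G.subgraphOfAdj hadj ⊔ Pm', (Subgraph.IsMatching.subgraphOfAdj hadj).sup h1 hdisj, ?_, ?_, ?_⟩
      · rw [Subgraph.verts_sup, h2]
        ext z
        simp only [subgraphOfAdj_verts, List.dropLast_cons₂, List.tail_cons,
          Set.mem_union, Set.mem_insert_iff, Set.mem_singleton_iff,
          Set.mem_setOf_eq, List.mem_cons, Set.mem_image]
        constructor
        · rintro ((rfl | rfl) | h | h)
          · exact Or.inl (Or.inl rfl)
          · exact Or.inr ⟨b, Or.inl rfl, rfl⟩
          · exact Or.inl (Or.inr h)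
          · obtain ⟨w, hw1, hw2⟩ := h
            exact Or.inr ⟨w, Or.inr hw1, hw2⟩
        · rintro ((rfl | h) | ⟨w, (rfl | hw1), hw2⟩)
          · exact Or.inl (Or.inl rfl)
          · exact Or.inr (Or.inl h)
          · exact Or.inl (Or.inr hw2.symm)
          · exact Or.inr (Or.inr ⟨w, hw1, hw2⟩)
      · rw [Subgraph.edgeSet_sup]
        have hle := Set.ncard_union_le ((G.subgraphOfAdj hadj).edgeSet) Pm'.edgeSet
        have h5 : ((G.subgraphOfAdj hadj).edgeSet).ncard = 1 := by
          rw [edgeSet_subgraphOfAdj]; simp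
        have hset : {v | v ∈ (a :: b :: rest).dropLast} =
            insert a {v | v ∈ (b :: rest).dropLast} := by
          ext z
          simp [List.dropLast_cons₂]
        have hnomem : a ∉ {v | v ∈ (b :: rest).dropLast} :=
          fun h => hanotin (List.dropLast_subset _ h)
        rw [hset, Set.ncard_insert_of_notMem hnomem (Set.toFinite _)]
        omega
      · intro x y hxy
        rcases hxy with hxy | hxy
        · rw [subgraphOfAdj_adj, Sym2.eq_iff] at hxy
          rcases hxy with ⟨rfl, -⟩ | hq
          · left; simp
          · right
            simp only [List.dropLast_cons₂, List.mem_cons]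
            tauto
        · rcases h4 x y hxy with h | h
          · left
            rw [List.dropLast_cons₂]
            exact List.mem_cons_of_mem _ h
          · right
            rw [List.dropLast_cons₂]
            exact List.mem_cons_of_mem _ h

lemma fillMatching [Fintype V] (M : G.Subgraph) (m : V → V)
    (hmadj : ∀ v, M.Adj v (m v)) (hmu : ∀ v w, M.Adj v w → w = m v)
    (hminv : ∀ v, m (m v) = v) (S : Set V) :
    ∃ Fm : G.Subgraph, Fm.IsMatching ∧ Fm.verts = S ∪ m '' S ∧
      Fm.edgeSet.ncard ≤ S.ncard ∧ (∀ x y, Fm.Adj x y → x ∈ S ∨ y ∈ S) := by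
  classical
  refine ⟨M.induce (S ∪ m '' S), ?_, rfl, ?_, ?_⟩
  · intro v hv
    have hv' : v ∈ S ∪ m '' S := hv
    have hmv : m v ∈ S ∪ m '' S := by
      rcases hv' with h | ⟨s, hs, rfl⟩
      · exact Or.inr ⟨v, h, rfl⟩
      · rw [hminv]; exact Or.inl hs
    refine ⟨m v, ⟨hv', hmv, hmadj v⟩, ?_⟩
    rintro y ⟨-, -, hadj⟩
    exact hmu v y hadj
  · have hsub : (M.induce (S ∪ m '' S)).edgeSet ⊆ (fun v => s(v, m v)) '' S := by
      intro e he
      induction e with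
      | _ x y =>
        obtain ⟨hx, hy, hadj⟩ := he
        have hyx : y = m x := hmu x y hadj
        rcases hx with hx | ⟨s, hs, rfl⟩
        · exact ⟨x, hx, by rw [hyx]⟩
        · refine ⟨s, hs, ?_⟩
          rw [hyx, hminv, Sym2.eq_swap]
    calc (M.induce (S ∪ m '' S)).edgeSet.ncard
        ≤ ((fun v => s(v, m v)) '' S).ncard :=
          Set.ncard_le_ncard hsub (Set.toFinite _)
      _ ≤ S.ncard := Set.ncard_image_le (Set.toFinite _)
  · rintro x y ⟨hx, -, hadj⟩
    rcases hx with hx | ⟨s, hs, rfl⟩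
    · exact Or.inl hx
    · right
      have := hmu (m s) y hadj
      rw [this, hminv]
      exact hs


/-- Strong connectivity of `D(G,M)` for a `1`-extendable connected graph. -/
lemma strongConn
    (hGm : ∀ v, G.Adj v (m v)) (hminv : ∀ v, m (m v) = v)
    (hsplit : ∀ u v, G.Adj u v → (u ∈ A ↔ v ∉ A))
    (hconn : G.Connected)
    (hext1 : ∀ x y, G.Adj x y → ∃ P : G.Subgraph, P.IsPerfectMatching ∧ P.Adj x y)
    (u v : V) (hu : u ∈ A) (hv : v ∈ A) :
    Relation.ReflTransGen (fun b c => c ∈ A ∧ G.Adj b (m c)) u v := by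
  classical
  have hminj : Function.Injective m :=
    Function.LeftInverse.injective (g := m) hminv
  have hmA : ∀ x, x ∈ A ↔ m x ∉ A := fun x => hsplit x (m x) (hGm x)
  by_contra hcon
  set r : V → V → Prop := fun b c => c ∈ A ∧ G.Adj b (m c) with hr
  set R : Set V := {a | Relation.ReflTransGen r u a} with hR
  have huR : u ∈ R := Relation.ReflTransGen.refl
  have hRA : R ⊆ A := by
    intro a ha
    rcases (Relation.ReflTransGen.cases_tail ha) with rfl | ⟨c, -, hc⟩
    · exact hu
    · exact hc.1
  have hvR : v ∉ R := hcon
  -- neighbors of R are exactly m '' R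
  have hNR : ∀ b, (∃ x ∈ R, G.Adj x b) → b ∈ m '' R := by
    rintro b ⟨x, hx, hadj⟩
    have hbB : b ∉ A := (hsplit x b hadj).mp (hRA hx)
    have hmbA : m b ∈ A := by
      by_contra h
      have := (hmA (m b)).not.mp h
      rw [hminv b] at this
      exact this hbB
    have : Relation.ReflTransGen r u (m b) :=
      hx.tail ⟨hmbA, by rwa [hminv]⟩
    exact ⟨m b, this, hminv b⟩
  set Z : Set V := R ∪ m '' R with hZ
  have hvZ : v ∉ Z := by
    rintro (h | ⟨x, hx, rfl⟩)
    · exact hvR h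
    · exact ((hmA x).mp (hRA hx)) hv
  obtain ⟨x, y, hadj, hxZ, hyZ⟩ := cross_edge hconn ⟨u, Or.inl huR⟩ ⟨v, hvZ⟩
  have hxm : ∃ a ∈ R, x = m a := by
    rcases hxZ with hx | ⟨a, ha, rfl⟩
    · exact absurd (Or.inr (hNR y ⟨x, hx, hadj⟩)) hyZ
    · exact ⟨a, ha, rfl⟩
  obtain ⟨a, haR, rfl⟩ := hxm
  obtain ⟨P, hPM, hPadj⟩ := hext1 y (m a) hadj.symm
  refine pigeonAux hPM hminj (X := R) (T := ∅) (b₀ := m a) ⟨a, haR, rfl⟩ ?_ ?_ ?_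
  · intro x hx yy hyy
    exact Or.inl (hNR yy ⟨x, hx, hyy⟩)
  · simp
  · intro x hx hPx
    obtain ⟨w, -, hw⟩ := hPM.1 (hPM.2 (m a))
    have h1 : x = w := hw _ hPx.symm
    have h2 : y = w := hw _ hPadj.symm
    rw [h2, ← h1] at hyZ
    exact hyZ (Or.inl hx)


/-- Main combinatorial lemma: in a connected `k`-extendable graph, every
nonempty `X ⊆ A` with a non-neighbor in `B` has at least `|X| + k` neighbors. -/
lemma deficiency (hGm : ∀ v, G.Adj v (m v)) (hminv : ∀ v, m (m v) = v)
    (hmadj : ∀ v, M.Adj v (m v)) (hmu : ∀ v w, M.Adj v w → w = m v)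
    (hsplit : ∀ u v, G.Adj u v → (u ∈ A ↔ v ∉ A))
    (hconn : G.Connected) (hk : 1 ≤ k) (hext : KExtendable G k)
    (X : Set V) (hXA : X ⊆ A) (hXne : X.Nonempty)
    (hw : ∃ w, w ∉ A ∧ ∀ x ∈ X, ¬ G.Adj x w) :
    X.ncard + k ≤ {b | ∃ x ∈ X, G.Adj x b}.ncard := by
  classical
  have hminj : Function.Injective m :=
    Function.LeftInverse.injective (g := m) hminv
  have hmA : ∀ x, x ∈ A ↔ m x ∉ A := fun x => hsplit x (m x) (hGm x)
  have hmB : ∀ x, x ∉ A → m x ∈ A := by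
    intro x hx
    by_contra h
    have := (hmA (m x)).not.mp h
    rw [hminv] at this
    exact this hx
  have himg2 : ∀ C : Set V, m '' (m '' C) = C := by
    intro C
    rw [← Set.image_comp]
    simp [Function.comp_def, hminv]
  by_contra hcon
  push_neg at hcon
  set NX : Set V := {b | ∃ x ∈ X, G.Adj x b} with hNX
  set Mid : Set V := m '' NX \ X with hMid
  obtain ⟨w, hwB, hwadj⟩ := hw
  -- basic containments
  have hXsub : X ⊆ m '' NX := by
    intro x hx
    exact ⟨m x, ⟨x, hx, hGm x⟩, hminv x⟩
  have hNXB : ∀ b ∈ NX, b ∉ A := by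
    rintro b ⟨x, hx, hadj⟩
    exact (hsplit x b hadj).mp (hXA hx)
  have hMidA : Mid ⊆ A := by
    rintro d ⟨⟨b, hb, rfl⟩, -⟩
    exact hmB b (hNXB b hb)
  have hMidX : ∀ d ∈ Mid, d ∉ X := fun d hd => hd.2
  have hmX_NX : ∀ x ∈ X, m x ∈ NX := fun x hx => ⟨x, hx, hGm x⟩
  have hunion : m '' NX = X ∪ Mid := by
    rw [hMid]
    exact (Set.union_diff_cancel hXsub).symm
  have hNXeq : NX = m '' X ∪ m '' Mid := by
    have := congrArg (fun C => m '' C) hunion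
    simpa [himg2, Set.image_union] using this
  -- the extra vertex u₀
  have hu0A : m w ∈ A := hmB w hwB
  have hu0X : m w ∉ X := fun h => hwadj (m w) h (by simpa [hminv] using hGm (m w))
  have hu0Mid : m w ∉ Mid := by
    rintro ⟨⟨b, hb, hbe⟩, -⟩
    have : b = w := hminj hbe
    subst this
    obtain ⟨x, hx, hadj⟩ := hb
    exact hwadj x hx hadj
  -- cardinalities
  have hmNXcard : (m '' NX).ncard = NX.ncard := Set.ncard_image_of_injective _ hminj
  have hMidcard : Mid.ncard + X.ncard = NX.ncard := by
    rw [hMid]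
    rw [Set.ncard_diff (by exact hXsub) (Set.toFinite _)]
    have hXle : X.ncard ≤ (m '' NX).ncard :=
      Set.ncard_le_ncard hXsub (Set.toFinite _)
    omega
  have hMidk : Mid.ncard + 1 ≤ k := by omega
  -- 1-extendability
  have hext1 : ∀ x y, G.Adj x y → ∃ P : G.Subgraph, P.IsPerfectMatching ∧ P.Adj x y := by
    intro x y hadj
    obtain ⟨P, hle, hP⟩ := hext (G.subgraphOfAdj hadj)
      (Subgraph.IsMatching.subgraphOfAdj hadj)
      (by rw [edgeSet_subgraphOfAdj]; simpa using hk)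
    exact ⟨P, hP, hle.2 (by rw [subgraphOfAdj_adj])⟩
  -- reach X from u₀ through Mid
  set Ufull : Set V := {a | a ∈ A ∧ a ∉ X ∧ a ∉ Mid} with hUfull
  set r'' : V → V → Prop := fun b c => (c ∈ Mid ∪ X) ∧ b ∉ X ∧ G.Adj b (m c) with hr''
  set TT : Set V := {a | ∃ u' ∈ Ufull, Relation.ReflTransGen r'' u' a} with hTT
  obtain ⟨x₀, hx₀⟩ := hXne
  have hreach := strongConn hGm hminv hsplit hconn hext1 (m w) x₀ hu0A (hXA hx₀)
  have hmain : ∀ c, Relation.ReflTransGen (fun b c => c ∈ A ∧ G.Adj b (m c)) (m w) c →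
      (∃ x ∈ X, x ∈ TT) ∨ (c ∈ TT ∧ c ∉ X) := by
    intro c hc
    induction hc with
    | refl =>
      exact Or.inr ⟨⟨m w, ⟨hu0A, hu0X, hu0Mid⟩, Relation.ReflTransGen.refl⟩, hu0X⟩
    | tail huc hstep ih =>
      rename_i c' c''
      rcases ih with h | ⟨⟨u', hu', hrt⟩, hnX⟩
      · exact Or.inl h
      · by_cases hcm : c'' ∈ Mid ∪ X
        · have hrt' : c'' ∈ TT := ⟨u', hu', hrt.tail ⟨hcm, hnX, hstep.2⟩⟩
          rcases hcm with hmid | hX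
          · exact Or.inr ⟨hrt', hMidX _ hmid⟩
          · exact Or.inl ⟨c'', hX, hrt'⟩
        · have : c'' ∈ Ufull := by
            refine ⟨hstep.1, ?_, ?_⟩
            · exact fun h => hcm (Or.inr h)
            · exact fun h => hcm (Or.inl h)
          exact Or.inr ⟨⟨c'', this, Relation.ReflTransGen.refl⟩, this.2.1⟩
  have hx₁ : ∃ x₁ ∈ X, x₁ ∈ TT := by
    rcases hmain x₀ hreach with h | ⟨-, hnx⟩
    · exact h
    · exact absurd hx₀ hnx
  obtain ⟨x₁, hx₁X, u₁, hu₁, hrt⟩ := hx₁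
  -- extract a nodup chain
  obtain ⟨l, hl, hlast⟩ := List.exists_isChain_cons_of_relationReflTransGen hrt
  have hch' : List.Chain' r'' (u₁ :: l) := hl
  obtain ⟨LL, hLLne, hLLch, hLLnd, hLLhead, hLLlast, hLLsub⟩ :=
    chain'_nodup_extract (u₁ :: l).length (u₁ :: l) le_rfl (by simp) hch'
  obtain ⟨a₁, tl, rfl⟩ := List.exists_cons_of_ne_nil hLLne
  have ha₁ : a₁ = u₁ := by simpa using hLLhead
  subst ha₁
  -- now the head variable is named a₁
  have hu₁x₁ : a₁ ≠ x₁ := fun h => hu₁.2.1 (h ▸ hx₁X)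
  have htlne : tl ≠ [] := by
    rintro rfl
    apply hu₁x₁
    have h1 : List.getLast (a₁ :: l) (by simp) = x₁ := hlast
    have h2 : (a₁ :: ([] : List V)).getLast? = (a₁ :: l).getLast? := hLLlast
    rw [List.getLast?_eq_getLast (l := a₁ :: ([] : List V)) (by simp), List.getLast?_eq_getLast (l := a₁ :: l) (by simp), h1] at h2
    simpa using h2
  obtain ⟨b₁, rest, rfl⟩ := List.exists_cons_of_ne_nil htlne
  set tl : List V := b₁ :: rest with htl
  have hlastx₁ : tl.getLast (by simp [htl]) = x₁ := by
    have h1 : List.getLast (a₁ :: l) (by simp) = x₁ := hlast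
    have h2 : (a₁ :: tl).getLast? = (a₁ :: l).getLast? := hLLlast
    rw [List.getLast?_eq_getLast (l := a₁ :: tl) (by simp), List.getLast?_eq_getLast (l := a₁ :: l) (by simp), h1] at h2
    have h3 : (a₁ :: tl).getLast (by simp) = x₁ := by simpa using h2
    rwa [List.getLast_cons (by simp [htl])] at h3
  have hx₁tl : x₁ ∈ tl := hlastx₁ ▸ List.getLast_mem _
  -- membership facts
  have htlmem : ∀ z ∈ tl, z ∈ Mid ∪ X := by
    intro z hz
    obtain ⟨y, hy⟩ := chain'_mem_tail (a₁ :: tl) hLLch z (by simpa using hz)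
    exact hy.1
  have hdlmem : ∀ z ∈ (a₁ :: tl).dropLast, z ∉ X := by
    intro z hz
    obtain ⟨y, hy⟩ := chain'_mem_dropLast (a₁ :: tl) hLLch z hz
    exact hy.2.1
  have hLLA : ∀ z ∈ a₁ :: tl, z ∈ A := by
    intro z hz
    rcases List.mem_cons.mp hz with rfl | hz'
    · exact hu₁.1
    · rcases htlmem z hz' with h | h
      · exact hMidA h
      · exact hXA h
  -- build the matchings
  obtain ⟨Pm, hPm1, hPm2, hPm3, hPm4⟩ := pathMatching (G := G) m hminj
    (fun x hx => (hmA x).mp hx) (a₁ :: tl) hLLnd hLLA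
    (hLLch.imp fun _ _ hab => hab.2.2)
  set S : Set V := Mid \ {v | v ∈ a₁ :: tl} with hS
  obtain ⟨Fm, hFm1, hFm2, hFm3, hFm4⟩ := fillMatching (G := G) M m hmadj hmu hminv S
  set dlSet : Set V := {v | v ∈ (a₁ :: tl).dropLast} with hdlSet
  have hSMid : S ⊆ Mid := Set.diff_subset
  have hSA : S ⊆ A := hSMid.trans hMidA
  have hdlsub : dlSet ⊆ insert a₁ Mid := by
    intro z hz
    have hz' : z ∈ (a₁ :: tl).dropLast := hz
    rw [htl, List.dropLast_cons₂, List.mem_cons] at hz'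
    rcases hz' with rfl | hz'
    · exact Set.mem_insert _ _
    · have hztl : z ∈ tl := List.dropLast_subset _ hz'
      have hznX : z ∉ X := by
        apply hdlmem
        rw [htl, List.dropLast_cons₂, List.mem_cons]
        exact Or.inr hz'
      rcases htlmem z hztl with h | h
      · exact Set.mem_insert_of_mem _ h
      · exact absurd h hznX
  have hdlA : dlSet ⊆ A := fun z hz => hLLA z (List.dropLast_subset _ hz)
  -- disjointness of the two matchings
  have hdisjPF : Disjoint Pm.support Fm.support := by
    rw [hPm1.support_eq_verts, hFm1.support_eq_verts, hPm2, hFm2]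
    rw [Set.disjoint_left]
    rintro z (hz | ⟨t', ht', rfl⟩)
    · rintro (hz2 | ⟨s', hs', rfl⟩)
      · exact hz2.2 (List.dropLast_subset _ hz)
      · exact (hmA s').mp (hSA hs') (hdlA hz)
    · have ht'A : m t' ∉ A := (hmA t').mp (hLLA t' (List.mem_cons_of_mem _ ht'))
      rintro (hz2 | ⟨s', hs', hse⟩)
      · exact ht'A (hSA hz2)
      · have : s' = t' := hminj hse
        subst this
        exact hs'.2 (List.mem_cons_of_mem _ ht')
  set F : G.Subgraph := Pm ⊔ Fm with hF
  have hFmatch : F.IsMatching := hPm1.sup hFm1 hdisjPF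
  -- edge count
  have hdisj_dl_S : Disjoint dlSet S := by
    rw [Set.disjoint_left]
    intro z hz hzS
    exact hzS.2 (List.dropLast_subset _ hz)
  have hcount : F.edgeSet.ncard ≤ k := by
    have h1 : F.edgeSet = Pm.edgeSet ∪ Fm.edgeSet := Subgraph.edgeSet_sup
    have h2 := Set.ncard_union_le Pm.edgeSet Fm.edgeSet
    have h3 : dlSet.ncard + S.ncard = (dlSet ∪ S).ncard :=
      (Set.ncard_union_eq hdisj_dl_S (Set.toFinite _) (Set.toFinite _)).symm
    have h4 : (dlSet ∪ S).ncard ≤ (insert a₁ Mid).ncard :=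
      Set.ncard_le_ncard (Set.union_subset hdlsub
        (fun z hz => Set.mem_insert_of_mem _ (hSMid hz))) (Set.toFinite _)
    have h5 : (insert a₁ Mid).ncard ≤ Mid.ncard + 1 := Set.ncard_insert_le _ _
    rw [h1]
    omega
  obtain ⟨P, hFP, hP⟩ := hext F hFmatch hcount
  -- blocking facts
  have hFside : ∀ p q, F.Adj p q → p ∈ insert a₁ Mid ∨ q ∈ insert a₁ Mid := by
    intro p q hpq
    rcases hpq with h | h
    · rcases hPm4 p q h with h' | h'
      · exact Or.inl (hdlsub h')
      · exact Or.inr (hdlsub h')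
    · rcases hFm4 p q h with h' | h'
      · exact Or.inl (Set.mem_insert_of_mem _ (hSMid h'))
      · exact Or.inr (Set.mem_insert_of_mem _ (hSMid h'))
  have hinsX : ∀ z ∈ insert a₁ Mid, z ∉ X := by
    rintro z (rfl | hz)
    · exact hu₁.2.1
    · exact hMidX _ hz
  have hblock : ∀ b ∈ F.verts, b ∉ A → ∀ x ∈ X, ¬ P.Adj x b := by
    intro b hb hbA x hxX hPadj
    obtain ⟨w', hw', -⟩ := hFmatch hb
    have hw'X : w' ∉ X := by
      rcases hFside b w' hw' with h | h
      · exact absurd ((Set.insert_subset_iff.mpr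
          ⟨hu₁.1, hMidA⟩) h) hbA
      · exact hinsX w' h
    obtain ⟨w'', -, hww⟩ := hP.1 (hP.2 b)
    have e1 : w' = w'' := hww _ (hFP.2 hw')
    have e2 : x = w'' := hww _ hPadj.symm
    exact hw'X (e1 ▸ e2 ▸ hxX)
  -- apply the pigeonhole
  refine pigeonAux hP hminj (X := X) (T := m '' Mid) (b₀ := m x₁)
    ⟨x₁, hx₁X, rfl⟩ ?_ ?_ ?_
  · intro x hx y hy
    have : y ∈ NX := ⟨x, hx, hy⟩
    rw [hNXeq] at this
    exact this
  · rintro b ⟨d, hd, rfl⟩ x hxX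
    have hbA : m d ∉ A := (hmA d).mp (hMidA hd)
    have hbF : m d ∈ F.verts := by
      rw [hF, Subgraph.verts_sup, hPm2, hFm2]
      by_cases hdL : d ∈ a₁ :: tl
      · left; right
        refine ⟨d, ?_, rfl⟩
        rcases List.mem_cons.mp hdL with rfl | h
        · exact absurd hd hu₁.2.2
        · exact h
      · right; right
        exact ⟨d, ⟨hd, hdL⟩, rfl⟩
    exact hblock (m d) hbF hbA x hxX
  · intro x hxX
    have hbA : m x₁ ∉ A := (hmA x₁).mp (hXA hx₁X)
    have hbF : m x₁ ∈ F.verts := by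
      rw [hF, Subgraph.verts_sup, hPm2]
      exact Or.inl (Or.inr ⟨x₁, hx₁tl, rfl⟩)
    exact hblock (m x₁) hbF hbA x hxX



lemma basicFacts (hGm : ∀ v, G.Adj v (m v)) (hminv : ∀ v, m (m v) = v)
    (hsplit : ∀ u v, G.Adj u v → (u ∈ A ↔ v ∉ A)) :
    Function.Injective m ∧ (∀ x, x ∈ A ↔ m x ∉ A) ∧ (∀ x, x ∉ A → m x ∈ A) := by
  have hminj : Function.Injective m :=
    Function.LeftInverse.injective (g := m) hminv
  have hmA : ∀ x, x ∈ A ↔ m x ∉ A := fun x => hsplit x (m x) (hGm x)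
  refine ⟨hminj, hmA, ?_⟩
  intro x hx
  by_contra h
  have := (hmA (m x)).not.mp h
  rw [hminv] at this
  exact this hx

lemma hDGM (hmadj : ∀ v, M.Adj v (m v)) (hmu : ∀ v w, M.Adj v w → w = m v)
    (a a' : A) : DGM G A M a a' ↔ G.Adj (↑a) (m ↑a') := by
  constructor
  · rintro ⟨b, h1, h2⟩
    rwa [hmu _ _ h1] at h2
  · intro h
    exact ⟨m ↑a', hmadj _, h⟩

/-- Direction 1: `k`-extendable implies strongly `k`-connected. -/
lemma dir1 (hGm : ∀ v, G.Adj v (m v)) (hminv : ∀ v, m (m v) = v)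
    (hmadj : ∀ v, M.Adj v (m v)) (hmu : ∀ v w, M.Adj v w → w = m v)
    (hsplit : ∀ u v, G.Adj u v → (u ∈ A ↔ v ∉ A))
    (hconn : G.Connected) (hk : 1 ≤ k) (hext : KExtendable G k) :
    StronglyKConnected (DGM G A M) k := by
  classical
  obtain ⟨hminj, hmA, hmB⟩ := basicFacts hGm hminv hsplit
  intro S hS u v hu hv
  by_contra hcon
  set rel : A → A → Prop := fun x y => DGM G A M x y ∧ x ∉ S ∧ y ∉ S with hrel
  set R : Set ↥A := {a | Relation.ReflTransGen rel u a} with hR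
  have huR : u ∈ R := Relation.ReflTransGen.refl
  have hvR : v ∉ R := hcon
  have hRS : ∀ a ∈ R, a ∉ S := by
    intro a ha
    rcases Relation.ReflTransGen.cases_tail ha with rfl | ⟨c, -, hc⟩
    · exact hu
    · exact hc.2.2
  set X : Set V := Subtype.val '' R with hX
  have hXA : X ⊆ A := by rintro z ⟨a, -, rfl⟩; exact a.2
  have hXne : X.Nonempty := ⟨↑u, u, huR, rfl⟩
  have hw : ∃ w, w ∉ A ∧ ∀ x ∈ X, ¬ G.Adj x w := by
    refine ⟨m ↑v, (hmA ↑v).mp v.2, ?_⟩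
    rintro x ⟨a, haR, rfl⟩ hadj
    exact hvR (haR.tail ⟨(hDGM hmadj hmu a v).mpr hadj, hRS a haR, hv⟩)
  have hlow := deficiency hGm hminv hmadj hmu hsplit hconn hk hext X hXA hXne hw
  set NX : Set V := {b | ∃ x ∈ X, G.Adj x b} with hNX
  have hhigh : NX ⊆ m '' X ∪ m '' (Subtype.val '' S) := by
    rintro b ⟨x, ⟨a, haR, rfl⟩, hadj⟩
    have hbB : b ∉ A := (hsplit _ _ hadj).mp a.2
    have hmbA : m b ∈ A := hmB b hbB
    set a' : ↥A := ⟨m b, hmbA⟩ with ha'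
    have hadj' : G.Adj ↑a (m ↑a') := by
      show G.Adj ↑a (m (m b))
      rwa [hminv]
    by_cases ha'S : a' ∈ S
    · right
      exact ⟨m b, ⟨a', ha'S, rfl⟩, (hminv b).symm ▸ rfl⟩
    · left
      have : a' ∈ R := haR.tail ⟨(hDGM hmadj hmu a a').mpr hadj', hRS a haR, ha'S⟩
      exact ⟨m b, ⟨a', this, rfl⟩, by rw [hminv]⟩
  have h1 : NX.ncard ≤ (m '' X).ncard + (m '' (Subtype.val '' S)).ncard :=
    le_trans (Set.ncard_le_ncard hhigh (Set.toFinite _)) (Set.ncard_union_le _ _)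
  have h2 : (m '' X).ncard = X.ncard := Set.ncard_image_of_injective _ hminj
  have h3 : (m '' (Subtype.val '' S)).ncard ≤ S.ncard := by
    rw [Set.ncard_image_of_injective _ hminj,
      Set.ncard_image_of_injective _ Subtype.val_injective]
  omega

/-- Strong `k`-connectivity implies the deficiency bound. -/
lemma skcDef (hGm : ∀ v, G.Adj v (m v)) (hminv : ∀ v, m (m v) = v)
    (hmadj : ∀ v, M.Adj v (m v)) (hmu : ∀ v w, M.Adj v w → w = m v)
    (hsplit : ∀ u v, G.Adj u v → (u ∈ A ↔ v ∉ A))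
    (hskc : StronglyKConnected (DGM G A M) k)
    (X : Set V) (hXA : X ⊆ A) (hXne : X.Nonempty)
    (hw : ∃ w, w ∉ A ∧ ∀ x ∈ X, ¬ G.Adj x w) :
    X.ncard + k ≤ {b | ∃ x ∈ X, G.Adj x b}.ncard := by
  classical
  obtain ⟨hminj, hmA, hmB⟩ := basicFacts hGm hminv hsplit
  by_contra hcon
  push_neg at hcon
  set NX : Set V := {b | ∃ x ∈ X, G.Adj x b} with hNX
  obtain ⟨w, hwB, hwadj⟩ := hw
  have hXsub : X ⊆ m '' NX := fun x hx => ⟨m x, ⟨x, hx, hGm x⟩, hminv x⟩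
  have hNXB : ∀ b ∈ NX, b ∉ A := by
    rintro b ⟨x, hx, hadj⟩
    exact (hsplit x b hadj).mp (hXA hx)
  have hmNXA : ∀ z ∈ m '' NX, z ∈ A := by
    rintro z ⟨b, hb, rfl⟩
    exact hmB b (hNXB b hb)
  set S₀ : Set ↥A := {a | ↑a ∈ m '' NX ∧ (↑a : V) ∉ X} with hS₀
  have hS₀val : Subtype.val '' S₀ = m '' NX \ X := by
    ext z
    constructor
    · rintro ⟨a, ⟨h1, h2⟩, rfl⟩
      exact ⟨h1, h2⟩
    · rintro ⟨h1, h2⟩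
      exact ⟨⟨z, hmNXA z h1⟩, ⟨h1, h2⟩, rfl⟩
  have hS₀card : S₀.ncard < k := by
    have e1 : S₀.ncard = (m '' NX \ X).ncard := by
      rw [← hS₀val, Set.ncard_image_of_injective _ Subtype.val_injective]
    have e2 : (m '' NX \ X).ncard = (m '' NX).ncard - X.ncard :=
      Set.ncard_diff hXsub (Set.toFinite _)
    have e3 : (m '' NX).ncard = NX.ncard := Set.ncard_image_of_injective _ hminj
    have e4 : X.ncard ≤ (m '' NX).ncard := Set.ncard_le_ncard hXsub (Set.toFinite _)
    omega
  obtain ⟨x₀, hx₀⟩ := hXne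
  set u : ↥A := ⟨x₀, hXA hx₀⟩ with hu'
  set v : ↥A := ⟨m w, hmB w hwB⟩ with hv'
  have huS : u ∉ S₀ := fun h => h.2 hx₀
  have hvS : v ∉ S₀ := by
    rintro ⟨⟨b, hb, hbe⟩, -⟩
    have : b = w := hminj hbe
    subst this
    obtain ⟨x, hx, hadj⟩ := hb
    exact hwadj x hx hadj
  have hrt := hskc S₀ hS₀card u v huS hvS
  have hall : ∀ c, Relation.ReflTransGen
      (fun x y => DGM G A M x y ∧ x ∉ S₀ ∧ y ∉ S₀) u c → (↑c : V) ∈ X := by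
    intro c hc
    induction hc with
    | refl => exact hx₀
    | tail hc' hstep ih =>
      rename_i c' c''
      obtain ⟨hD, -, hnS⟩ := hstep
      have hadj : G.Adj ↑c' (m ↑c'') := (hDGM hmadj hmu c' c'').mp hD
      have : m (↑c'' : V) ∈ NX := ⟨↑c', ih, hadj⟩
      have hc''m : (↑c'' : V) ∈ m '' NX := ⟨m ↑c'', this, hminv _⟩
      by_contra hX
      exact hnS ⟨hc''m, hX⟩
  have : m w ∈ X := hall v hrt
  exact hwadj (m w) this (by simpa [hminv] using hGm (m w))


/-- Hall-type direction: the deficiency bound implies `k`-extendability. -/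
lemma hallDir (hGm : ∀ v, G.Adj v (m v)) (hminv : ∀ v, m (m v) = v)
    (hsplit : ∀ u v, G.Adj u v → (u ∈ A ↔ v ∉ A))
    (hdef : ∀ X : Set V, X ⊆ A → X.Nonempty →
      (∃ w, w ∉ A ∧ ∀ x ∈ X, ¬ G.Adj x w) →
      X.ncard + k ≤ {b | ∃ x ∈ X, G.Adj x b}.ncard) :
    KExtendable G k := by
  classical
  have hminj : Function.Injective m :=
    Function.LeftInverse.injective (g := m) hminv
  have hmA : ∀ x, x ∈ A ↔ m x ∉ A := fun x => hsplit x (m x) (hGm x)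
  have hmB : ∀ x, x ∉ A → m x ∈ A := by
    intro x hx
    by_contra h
    have := (hmA (m x)).not.mp h
    rw [hminv] at this
    exact this hx
  -- |A| = |Aᶜ|
  have hAcard : A.ncard = (Aᶜ : Set V).ncard := by
    have : m '' A = Aᶜ := by
      ext z
      constructor
      · rintro ⟨a, ha, rfl⟩
        exact (hmA a).mp ha
      · intro hz
        exact ⟨m z, hmB z hz, hminv z⟩
    rw [← this, Set.ncard_image_of_injective _ hminj]
  intro F₀ hF₀m hF₀c
  -- the partner function of F₀
  have hpart : ∀ a : V, a ∈ F₀.verts → ∃ b, F₀.Adj a b ∧ ∀ c, F₀.Adj a c → c = b := by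
    intro a ha
    obtain ⟨b, hb, hub⟩ := hF₀m ha
    exact ⟨b, hb, fun c hc => hub c hc⟩
  choose p hp hup using hpart
  set SA : Set V := F₀.verts ∩ A with hSA
  set SB : Set V := F₀.verts \ A with hSB
  have hSAsub : SA ⊆ A := Set.inter_subset_right
  have hvertsplit : F₀.verts = SA ∪ SB := by
    rw [hSA, hSB]
    ext z
    by_cases hz : z ∈ A <;> simp [hz]
  -- the partner map is a bijection SA → SB
  have hpB : ∀ a (ha : a ∈ F₀.verts), a ∈ A → p a ha ∈ SB := by
    intro a ha haA
    have hadj := hp a ha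
    exact ⟨F₀.edge_vert hadj.symm, (hsplit _ _ (F₀.adj_sub hadj)).mp haA⟩
  have hpA : ∀ a (ha : a ∈ F₀.verts), a ∉ A → p a ha ∈ SA := by
    intro a ha haA
    have hadj := hp a ha
    have : p a ha ∈ A := by
      by_contra h
      exact haA ((hsplit _ _ (F₀.adj_sub hadj)).mpr h)
    exact ⟨F₀.edge_vert hadj.symm, this⟩
  have hSAB : SA.ncard = SB.ncard := by
    have hbij : Set.BijOn (fun a => if ha : a ∈ F₀.verts then p a ha else a) SA SB := by
      constructor
      · intro a ha
        show (if h : a ∈ F₀.verts then p a h else a) ∈ SB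
        rw [dif_pos ha.1]
        exact hpB a ha.1 ha.2
      constructor
      · intro a ha a' ha' he
        have he' : (if h : a ∈ F₀.verts then p a h else a) =
            (if h : a' ∈ F₀.verts then p a' h else a') := he
        rw [dif_pos ha.1, dif_pos ha'.1] at he'
        have he := he'
        have h1 : F₀.Adj a (p a ha.1) := hp a ha.1
        have h2 : F₀.Adj a' (p a' ha'.1) := hp a' ha'.1
        rw [he] at h1
        have hb : p a' ha'.1 ∈ F₀.verts := F₀.edge_vert h2.symm
        have := hup (p a' ha'.1) hb
        exact ((this a h1.symm).trans (this a' h2.symm).symm)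
      · intro b hb
        have hbv : b ∈ F₀.verts := hb.1
        have hq : p b hbv ∈ SA := hpA b hbv hb.2
        refine ⟨p b hbv, hq, ?_⟩
        show (if h : p b hbv ∈ F₀.verts then p (p b hbv) h else p b hbv) = b
        rw [dif_pos hq.1]
        have h2 : F₀.Adj b (p b hbv) := hp b hbv
        exact ((hup (p b hbv) hq.1) b h2.symm).symm
    calc SA.ncard
        = ((fun a => if ha : a ∈ F₀.verts then p a ha else a) '' SA).ncard :=
          (Set.ncard_image_of_injOn hbij.injOn).symm
      _ = SB.ncard := by rw [hbij.image_eq]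
  -- |SA| ≤ k via the edge set
  have hSAk : SA.ncard ≤ k := by
    have hinj : Set.InjOn (fun a => if ha : a ∈ F₀.verts then s(a, p a ha) else s(a, a)) SA := by
      intro a ha a' ha' he
      have he' : (if h : a ∈ F₀.verts then s(a, p a h) else s(a, a)) =
          (if h : a' ∈ F₀.verts then s(a', p a' h) else s(a', a')) := he
      rw [dif_pos ha.1, dif_pos ha'.1, Sym2.eq_iff] at he'
      rcases he' with ⟨h1, -⟩ | ⟨h1, h2⟩
      · exact h1
      · -- a = p a' _ ∈ SB, but a ∈ A
        exfalso
        exact (hpB a' ha'.1 ha'.2).2 (h1 ▸ ha.2)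
    have hsub : (fun a => if ha : a ∈ F₀.verts then s(a, p a ha) else s(a, a)) '' SA
        ⊆ F₀.edgeSet := by
      rintro e ⟨a, ha, rfl⟩
      show (if h : a ∈ F₀.verts then s(a, p a h) else s(a, a)) ∈ F₀.edgeSet
      rw [dif_pos ha.1]
      exact hp a ha.1
    calc SA.ncard = _ := (Set.ncard_image_of_injOn hinj).symm
      _ ≤ F₀.edgeSet.ncard := Set.ncard_le_ncard hsub (Set.toFinite _)
      _ ≤ k := hF₀c
  have hSBsub : SB ⊆ (Aᶜ : Set V) := fun z hz => hz.2
  -- set up Hall's theorem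
  haveI : Fintype ↥(A \ SA) := (Set.toFinite _).fintype
  set t : ↥(A \ SA) → Finset V :=
    fun a => (Set.toFinite {b | G.Adj ↑a b ∧ b ∉ F₀.verts}).toFinset with ht
  have hmemt : ∀ (a : ↥(A \ SA)) (b : V), b ∈ t a ↔ G.Adj ↑a b ∧ b ∉ F₀.verts := by
    intro a b
    simp [ht]
  have hhall : ∀ s : Finset ↥(A \ SA), s.card ≤ (s.biUnion t).card := by
    intro s
    rcases s.eq_empty_or_nonempty with rfl | hsne
    · simp
    set X : Set V := Subtype.val '' (↑s : Set ↥(A \ SA)) with hX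
    have hXA : X ⊆ A := by rintro z ⟨a, -, rfl⟩; exact a.2.1
    have hXne : X.Nonempty := ⟨↑hsne.choose, hsne.choose, hsne.choose_spec, rfl⟩
    have hXcard : X.ncard = s.card := by
      rw [hX, Set.ncard_image_of_injective _ Subtype.val_injective,
        Set.ncard_coe_finset]
    set NX : Set V := {b | ∃ x ∈ X, G.Adj x b} with hNX
    have hNXA : ∀ b ∈ NX, b ∉ A := by
      rintro b ⟨x, hx, hadj⟩
      exact (hsplit x b hadj).mp (hXA hx)
    have hsub1 : NX \ F₀.verts ⊆ ↑(s.biUnion t) := by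
      rintro b ⟨⟨x, ⟨a, ha, rfl⟩, hadj⟩, hbv⟩
      simp only [Finset.coe_biUnion, Set.mem_iUnion]
      exact ⟨a, ha, (hmemt a b).mpr ⟨hadj, hbv⟩⟩
    have hcard1 : (NX \ F₀.verts).ncard ≤ (s.biUnion t).card := by
      rw [← Set.ncard_coe_finset]
      exact Set.ncard_le_ncard hsub1 (Set.toFinite _)
    have hdiffeq : NX \ F₀.verts = NX \ SB := by
      ext z
      constructor
      · rintro ⟨h1, h2⟩
        exact ⟨h1, fun h => h2 h.1⟩
      · rintro ⟨h1, h2⟩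
        refine ⟨h1, fun hv => ?_⟩
        rw [hvertsplit] at hv
        rcases hv with hv | hv
        · exact hNXA z h1 hv.2
        · exact h2 hv
    have hcard2 : NX.ncard ≤ (NX \ SB).ncard + SB.ncard := by
      have : NX ⊆ (NX \ SB) ∪ SB := by
        intro z hz
        by_cases h : z ∈ SB
        · exact Or.inr h
        · exact Or.inl ⟨hz, h⟩
      calc NX.ncard ≤ ((NX \ SB) ∪ SB).ncard := Set.ncard_le_ncard this (Set.toFinite _)
        _ ≤ _ := Set.ncard_union_le _ _
    by_cases hcase : ∃ w, w ∉ A ∧ ∀ x ∈ X, ¬ G.Adj x w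
    · have hlow := hdef X hXA hXne hcase
      rw [← hNX] at hlow
      rw [hdiffeq] at hcard1
      omega
    · push_neg at hcase
      have hAc : (Aᶜ : Set V) ⊆ NX := by
        intro w hw
        obtain ⟨x, hx, hadj⟩ := hcase w hw
        exact ⟨x, hx, hadj⟩
      have h5 : A.ncard ≤ NX.ncard := by
        rw [hAcard]
        exact Set.ncard_le_ncard hAc (Set.toFinite _)
      have h6 : X.ncard ≤ (A \ SA).ncard := by
        apply Set.ncard_le_ncard _ (Set.toFinite _)
        rintro z ⟨a, -, rfl⟩
        exact a.2
      have h7 : (A \ SA).ncard = A.ncard - SA.ncard :=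
        Set.ncard_diff hSAsub (Set.toFinite _)
      have h8 : SA.ncard ≤ A.ncard :=
        Set.ncard_le_ncard hSAsub (Set.toFinite _)
      rw [hdiffeq] at hcard1
      omega
  obtain ⟨f, hfinj, hft⟩ :=
    (Finset.all_card_le_biUnion_card_iff_exists_injective t).mp hhall
  have hfadj : ∀ a : ↥(A \ SA), G.Adj (↑a) (f a) := fun a => ((hmemt a (f a)).mp (hft a)).1
  have hfnv : ∀ a : ↥(A \ SA), f a ∉ F₀.verts := fun a => ((hmemt a (f a)).mp (hft a)).2
  have hfB : ∀ a : ↥(A \ SA), f a ∉ A := fun a => (hsplit _ _ (hfadj a)).mp a.2.1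
  -- the range of f covers all of Aᶜ \ F₀.verts
  have hRngsub : Set.range f ⊆ (Aᶜ : Set V) \ F₀.verts := by
    rintro z ⟨a, rfl⟩
    exact ⟨hfB a, hfnv a⟩
  have hCBeq : (Aᶜ : Set V) \ F₀.verts = (Aᶜ : Set V) \ SB := by
    ext z
    constructor
    · rintro ⟨h1, h2⟩
      exact ⟨h1, fun h => h2 h.1⟩
    · rintro ⟨h1, h2⟩
      refine ⟨h1, fun hv => ?_⟩
      rw [hvertsplit] at hv
      rcases hv with hv | hv
      · exact h1 hv.2
      · exact h2 hv
  have hRngcard : (Set.range f).ncard = ((Aᶜ : Set V) \ F₀.verts).ncard := by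
    have e1 : (Set.range f).ncard = Nat.card ↥(A \ SA) := by
      rw [← Nat.card_coe_set_eq]
      exact Nat.card_range_of_injective hfinj
    have e2 : Nat.card ↥(A \ SA) = (A \ SA).ncard := Nat.card_coe_set_eq _
    have e3 : ((Aᶜ : Set V) \ SB).ncard = (Aᶜ : Set V).ncard - SB.ncard :=
      Set.ncard_diff hSBsub (Set.toFinite _)
    have e4 : (A \ SA).ncard = A.ncard - SA.ncard :=
      Set.ncard_diff hSAsub (Set.toFinite _)
    rw [e1, e2, hCBeq, e3, e4, hAcard, hSAB]
  have hRngeq : Set.range f = (Aᶜ : Set V) \ F₀.verts :=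
    Set.eq_of_subset_of_ncard_le hRngsub (le_of_eq hRngcard.symm) (Set.toFinite _)
  -- assemble the perfect matching
  set Q : G.Subgraph := ⨆ a : ↥(A \ SA), G.subgraphOfAdj (hfadj a) with hQ
  have hQm : Q.IsMatching := by
    apply Subgraph.IsMatching.iSup
      (fun a => Subgraph.IsMatching.subgraphOfAdj (hfadj a))
    intro i j hij
    rw [support_subgraphOfAdj, support_subgraphOfAdj, Set.disjoint_left]
    rintro z (rfl | rfl)
    · rintro (h | h)
      · exact hij (Subtype.ext (by exact h))
      · exact hfB j (h ▸ i.2.1)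
    · rintro (h | h)
      · exact hfB i (h.symm ▸ j.2.1)
      · exact hij (hfinj (by exact h))
  have hQverts : Q.verts = ⋃ a : ↥(A \ SA), ({↑a, f a} : Set V) := by
    rw [hQ, Subgraph.verts_iSup]
    simp only [subgraphOfAdj_verts]
  have hdisjQ : Disjoint F₀.support Q.support := by
    rw [hF₀m.support_eq_verts, hQm.support_eq_verts, hQverts, Set.disjoint_left]
    intro z hz hz2
    obtain ⟨a, ha⟩ := Set.mem_iUnion.mp hz2
    rcases ha with rfl | rfl
    · exact a.2.2 ⟨hz, a.2.1⟩
    · exact hfnv a hz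
  refine ⟨F₀ ⊔ Q, le_sup_left, hF₀m.sup hQm hdisjQ, ?_⟩
  intro v
  rw [Subgraph.verts_sup]
  by_cases hv : v ∈ F₀.verts
  · exact Or.inl hv
  by_cases hvA : v ∈ A
  · have hvSA : v ∈ A \ SA := ⟨hvA, fun h => hv h.1⟩
    right
    rw [hQverts]
    exact Set.mem_iUnion.mpr ⟨⟨v, hvSA⟩, Or.inl rfl⟩
  · have : v ∈ Set.range f := by
      rw [hRngeq]
      exact ⟨hvA, hv⟩
    obtain ⟨a, rfl⟩ := this
    right
    rw [hQverts]
    exact Set.mem_iUnion.mpr ⟨a, Or.inr rfl⟩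


end CoreAux
end AuxiliaryLemmas

/-- `G` is `k`-extendable if and only if `D(G, M)` is strongly `k`-connected. -/
theorem kExtendable_iff_stronglyConnected [Fintype V] (G : SimpleGraph V)
    (A B : Set V) (hbip : IsBipartition G A B) (hconn : G.Connected)
    (M : G.Subgraph) (hM : M.IsPerfectMatching) (k : ℕ) (hk : 1 ≤ k) :
    KExtendable G k ↔ StronglyKConnected (DGM G A M) k := by
  classical
  obtain ⟨hdisj, hcover, hadjor⟩ := hbip
  have hAB : ∀ z, z ∉ A ↔ z ∈ B := by
    intro z
    constructor
    · intro hz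
      have h2 : z ∈ A ∪ B := hcover ▸ Set.mem_univ z
      rcases (Set.mem_union z A B).mp h2 with h | h
      · exact absurd h hz
      · exact h
    · intro hz hz2
      exact Set.disjoint_left.mp hdisj hz2 hz
  have hsplit : ∀ u v, G.Adj u v → (u ∈ A ↔ v ∉ A) := by
    intro u v hadj
    rcases hadjor hadj with ⟨h1, h2⟩ | ⟨h1, h2⟩
    · exact ⟨fun _ => (hAB v).mpr h2, fun _ => h1⟩
    · have huA : u ∉ A := (hAB u).mpr h1
      exact ⟨fun hu => absurd hu huA, fun hv => absurd h2 hv⟩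
  have hM' := SimpleGraph.Subgraph.isPerfectMatching_iff.mp hM
  choose m hm hmu using hM'
  have hminv : ∀ v, m (m v) = v := fun v => (hmu (m v) v (hm v).symm).symm
  have hGm : ∀ v, G.Adj v (m v) := fun v => M.adj_sub (hm v)
  constructor
  · intro hext
    exact dir1 hGm hminv hm hmu hsplit hconn hk hext
  · intro hskc
    exact hallDir hGm hminv hsplit
      (fun X hXA hXne hw => skcDef hGm hminv hm hmu hsplit hskc X hXA hXne hw)
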